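/- (Submodularity of log-determinant) Let L be an n×n real symmetric positive definite matrix. Then the set function f(Y) = log det(L_Y) is submodular on {1,…,n}: for all subsets A ⊆ B ⊆ {1,…,n} and every j ∉ B, f(A ∪ {j}) − f(A) ≥ f(B ∪ {j}) − f(B). Equivalently, det(L_{A∪{j}}) · det(L_B) ≥ det(L_{B∪{j}}) · det(L_A). -/

import Mathlib

open Matrix BigOperators

/-- The principal submatrix of `M` indexed by the subset `S`. -/
def principalSubmatrix {n : ℕ} (M : Matrix (Fin n) (Fin n) ℝ) (S : Finset (Fin n)) :
    Matrix {i // i ∈ S} {i // i ∈ S} ℝ :=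
  M.submatrix (fun i => (i : Fin n)) (fun i => (i : Fin n))


namespace LogDetAux

variable {n : ℕ}

/-- extend a vector on a subset by zero -/
noncomputable def ext (S : Finset (Fin n)) (x : {i // i ∈ S} → ℝ) : Fin n → ℝ :=
  fun i => if h : i ∈ S then x ⟨i, h⟩ else 0

lemma sum_ext (S : Finset (Fin n)) (f : Fin n → ℝ) (hf : ∀ i ∉ S, f i = 0) :
    ∑ i, f i = ∑ i : {i // i ∈ S}, f (i : Fin n) := by
  rw [← Finset.sum_subtype S (fun _ => Iff.rfl) f]
  exact (Finset.sum_subset (Finset.subset_univ S) (fun i _ hi => hf i hi)).symm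

lemma sum_sub (A B : Finset (Fin n)) (hAB : A ⊆ B) (f : Fin n → ℝ)
    (hf : ∀ i ∉ A, f i = 0) :
    ∑ i : {i // i ∈ B}, f (i : Fin n) = ∑ i : {i // i ∈ A}, f (i : Fin n) := by
  rw [← sum_ext B f (fun i hi => hf i (fun hA => hi (hAB hA))), sum_ext A f hf]

lemma quad (L : Matrix (Fin n) (Fin n) ℝ) (S : Finset (Fin n)) (x : {i // i ∈ S} → ℝ) :
    ext S x ⬝ᵥ L *ᵥ ext S x = x ⬝ᵥ (principalSubmatrix L S) *ᵥ x := by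
  unfold dotProduct mulVec
  rw [sum_ext S _ (fun i hi => by simp [ext, hi])]
  refine Finset.sum_congr rfl fun i _ => ?_
  have : ∀ k : Fin n, True := fun _ => trivial
  congr 1
  · simp [ext, i.2]
  · unfold dotProduct
    rw [sum_ext S _ (fun k hk => by simp [ext, hk])]
    refine Finset.sum_congr rfl fun k _ => ?_
    simp [ext, k.2, principalSubmatrix]

lemma pd_sub {L : Matrix (Fin n) (Fin n) ℝ} (hL : L.PosDef) (S : Finset (Fin n)) :
    (principalSubmatrix L S).PosDef := by
  refine posDef_iff_dotProduct_mulVec.mpr ⟨hL.1.submatrix _, fun x hx => ?_⟩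
  have hy : ext S x ≠ 0 := by
    intro h
    apply hx
    funext i
    have := congrFun h (i : Fin n)
    simpa [ext, i.2] using this
  have := hL.dotProduct_mulVec_pos hy
  simpa [quad L S x] using this

end LogDetAux

namespace LogDetAux

variable {n : ℕ}

def vS (L : Matrix (Fin n) (Fin n) ℝ) (j : Fin n) (S : Finset (Fin n)) :
    {i // i ∈ S} → ℝ := fun i => L j i

noncomputable def qS (L : Matrix (Fin n) (Fin n) ℝ) (j : Fin n) (S : Finset (Fin n)) : ℝ :=
  vS L j S ⬝ᵥ (principalSubmatrix L S)⁻¹ *ᵥ vS L j S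

def eqv (j : Fin n) (S : Finset (Fin n)) (hj : j ∉ S) :
    ({i // i ∈ S} ⊕ Unit) ≃ {i // i ∈ insert j S} where
  toFun := Sum.elim (fun i => ⟨i, Finset.mem_insert_of_mem i.2⟩)
    (fun _ => ⟨j, Finset.mem_insert_self j S⟩)
  invFun := fun i => if h : (i : Fin n) ∈ S then Sum.inl ⟨i, h⟩ else Sum.inr ()
  left_inv := by
    rintro (i | ⟨⟩)
    · simp
    · simp [hj]
  right_inv := by
    rintro ⟨i, hi⟩
    by_cases h : i ∈ S
    · simp [h]
    · have : i = j := by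
        rcases Finset.mem_insert.mp hi with h1 | h2
        · exact h1
        · exact absurd h2 h
      subst this
      simp [h]

lemma block_eq (L : Matrix (Fin n) (Fin n) ℝ) (j : Fin n) (S : Finset (Fin n)) (hj : j ∉ S) :
    (principalSubmatrix L (insert j S)).submatrix (eqv j S hj) (eqv j S hj) =
      fromBlocks (principalSubmatrix L S) (fun i _ => L i j) (fun _ i => L j i)
        (fun _ _ => L j j) := by
  ext i k
  cases i <;> cases k <;> rfl

lemma det_insert {L : Matrix (Fin n) (Fin n) ℝ} (hL : L.PosDef) (j : Fin n)
    (S : Finset (Fin n)) (hj : j ∉ S) :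
    (principalSubmatrix L (insert j S)).det =
      (principalSubmatrix L S).det * (L j j - qS L j S) := by
  have hpd := pd_sub hL S
  have hiu : IsUnit (principalSubmatrix L S).det := hpd.det_pos.ne'.isUnit
  have : Invertible (principalSubmatrix L S) := (principalSubmatrix L S).invertibleOfIsUnitDet hiu
  rw [← det_submatrix_equiv_self (eqv j S hj), block_eq L j S hj]
  erw [det_fromBlocks₁₁,
    invOf_eq_nonsing_inv]
  congr 1
  rw [det_unique]
  show L j j - ∑ a : {i // i ∈ S}, (∑ b : {i // i ∈ S}, L j b * (principalSubmatrix L S)⁻¹ b a) * L a j = L j j - qS L j S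
  congr 1
  have hsym : ∀ a b : Fin n, L a b = L b a := by
    intro a b
    have := congrFun (congrFun hL.1 a) b
    simpa using this.symm
  simp only [qS, vS, dotProduct, mulVec, mul_apply, dotProduct, Finset.sum_mul, Finset.mul_sum]
  rw [Finset.sum_comm]
  exact Finset.sum_congr rfl fun a _ => Finset.sum_congr rfl fun b _ => by
    rw [hsym (b : Fin n) j]; ring

end LogDetAux

namespace LogDetAux

variable {n : ℕ}

lemma q_mono {L : Matrix (Fin n) (Fin n) ℝ} (hL : L.PosDef) (j : Fin n)
    (A B : Finset (Fin n)) (hAB : A ⊆ B) : qS L j A ≤ qS L j B := by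
  set MA := principalSubmatrix L A with hMA
  set MB := principalSubmatrix L B with hMB
  have hpdA := pd_sub hL A
  have hpdB := pd_sub hL B
  set vA := vS L j A
  set vB := vS L j B
  set u : {i // i ∈ A} → ℝ := MA⁻¹ *ᵥ vA with hu
  set w : {i // i ∈ B} → ℝ := MB⁻¹ *ᵥ vB with hw
  set x : {i // i ∈ B} → ℝ := fun i => ext A u (i : Fin n) with hx
  have hMAu : MA *ᵥ u = vA := by
    rw [hu, mulVec_mulVec, Matrix.mul_nonsing_inv _ hpdA.det_pos.ne'.isUnit, one_mulVec]
  have hMBw : MB *ᵥ w = vB := by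
    rw [hw, mulVec_mulVec, Matrix.mul_nonsing_inv _ hpdB.det_pos.ne'.isUnit, one_mulVec]
  have hext : ext B x = ext A u := by
    funext i
    by_cases hB : i ∈ B
    · simp [ext, hB, hx]
    · have hA : i ∉ A := fun h => hB (hAB h)
      simp [ext, hB, hA]
  -- c := u ⬝ᵥ vA
  have hxv : x ⬝ᵥ vB = u ⬝ᵥ vA := by
    have h1 : x ⬝ᵥ vB = ∑ i : {i // i ∈ B}, ext A u (i : Fin n) * L j (i : Fin n) := rfl
    have h2 : u ⬝ᵥ vA = ∑ i : {i // i ∈ A}, ext A u (i : Fin n) * L j (i : Fin n) := by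
      show ∑ i : {i // i ∈ A}, u i * vA i = _
      refine Finset.sum_congr rfl fun i _ => ?_
      simp [ext, i.2, vS, vA]
    rw [h1, h2]
    have h3 := sum_sub A B hAB (fun i => ext A u i * L j i)
      (fun i hi => by simp [ext, hi])
    exact h3
  have hxLx : x ⬝ᵥ MB *ᵥ x = u ⬝ᵥ vA := by
    have h1 : ext B x ⬝ᵥ L *ᵥ ext B x = x ⬝ᵥ MB *ᵥ x := quad L B x
    have h2 : ext A u ⬝ᵥ L *ᵥ ext A u = u ⬝ᵥ MA *ᵥ u := quad L A u
    rw [← h1, hext, h2, hMAu]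
  have hsymB : MBᵀ = MB := by
    ext i k
    have h := congrFun (congrFun hpdB.1 i) k
    simpa using h
  have hwLx : w ⬝ᵥ MB *ᵥ x = u ⬝ᵥ vA := by
    rw [dotProduct_mulVec, ← mulVec_transpose, hsymB, hMBw, dotProduct_comm, hxv]
  have hwLw : w ⬝ᵥ MB *ᵥ w = qS L j B := by
    rw [hMBw, dotProduct_comm]
    rfl
  have hq : 0 ≤ (x - w) ⬝ᵥ MB *ᵥ (x - w) := by
    have := hpdB.posSemidef.dotProduct_mulVec_nonneg (x - w)
    simpa using this
  have hexp : (x - w) ⬝ᵥ MB *ᵥ (x - w)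
      = x ⬝ᵥ MB *ᵥ x - x ⬝ᵥ MB *ᵥ w - w ⬝ᵥ MB *ᵥ x + w ⬝ᵥ MB *ᵥ w := by
    rw [mulVec_sub, sub_dotProduct, dotProduct_sub, dotProduct_sub]
    ring
  have hxLw : x ⬝ᵥ MB *ᵥ w = u ⬝ᵥ vA := by rw [hMBw, hxv]
  have hqA : qS L j A = u ⬝ᵥ vA := by rw [qS, dotProduct_comm]
  rw [hexp, hxLx, hxLw, hwLx, hwLw] at hq
  rw [hqA]
  linarith

end LogDetAux

open LogDetAux

/-- Submodularity of the log-determinant: for a positive definite `L`, the function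
`f(Y) = log det(L_Y)` satisfies the diminishing-returns inequality
`f(A ∪ {j}) − f(A) ≥ f(B ∪ {j}) − f(B)` for all `A ⊆ B` and `j ∉ B`; equivalently
`det(L_{A∪{j}}) · det(L_B) ≥ det(L_{B∪{j}}) · det(L_A)`. -/
theorem logdet_submodular {n : ℕ} (L : Matrix (Fin n) (Fin n) ℝ)
    (hL : L.PosDef) (A B : Finset (Fin n)) (hAB : A ⊆ B) (j : Fin n) (hj : j ∉ B) :
    Real.log (principalSubmatrix L (insert j A)).det
        - Real.log (principalSubmatrix L A).det
      ≥ Real.log (principalSubmatrix L (insert j B)).det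
        - Real.log (principalSubmatrix L B).det ∧
    (principalSubmatrix L (insert j A)).det * (principalSubmatrix L B).det
      ≥ (principalSubmatrix L (insert j B)).det * (principalSubmatrix L A).det := by
  have hjA : j ∉ A := fun h => hj (hAB h)
  have hpA := (pd_sub hL A).det_pos
  have hpB := (pd_sub hL B).det_pos
  have hdA := det_insert hL j A hjA
  have hdB := det_insert hL j B hj
  set sA := L j j - qS L j A with hsAdef
  set sB := L j j - qS L j B with hsBdef
  have hsAB : sB ≤ sA := by
    have := q_mono hL j A B hAB
    rw [hsAdef, hsBdef]
    linarith
  have hsB : 0 < sB := by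
    have hins := (pd_sub hL (insert j B)).det_pos
    rw [hdB] at hins
    rcases mul_pos_iff.mp hins with ⟨_, h⟩ | ⟨h, _⟩
    · exact h
    · linarith
  have hsA : 0 < sA := lt_of_lt_of_le hsB hsAB
  constructor
  · rw [hdA, hdB, Real.log_mul hpA.ne' hsA.ne', Real.log_mul hpB.ne' hsB.ne']
    have hlog : Real.log sB ≤ Real.log sA := Real.log_le_log hsB hsAB
    linarith
  · rw [hdA, hdB]
    have key := mul_le_mul_of_nonneg_left hsAB (mul_pos hpA hpB).le
    nlinarith [key]
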